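/- Let β₁ and β₂ be real numbers with β₂ ≥ 3 and β₁ ≥ β₂ and β₁ > 4. Then there exists a constant C=C(β₁,β₂) such that for all t≥0 and x∈ℝ³: ∫_0^t ∫_{ℝ³} ⟨t−s, x−y⟩^{−β₁} ⟨s, y⟩^{−β₂} dy ds ≤ C ⟨t,x⟩^{−β₂}. -/

import Mathlib

open MeasureTheory Real

noncomputable section

abbrev E3 := EuclideanSpace ℝ (Fin 3)

/-- The space-time Japanese bracket `⟨t,x⟩ = (1+t²+|x|²)^{1/2}`. -/
def jtx (t : ℝ) (x : E3) : ℝ := Real.sqrt (1 + t ^ 2 + ‖x‖ ^ 2)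

namespace Stmt5Aux

lemma base_pos (t : ℝ) (x : E3) : (0:ℝ) < 1 + t ^ 2 + ‖x‖ ^ 2 := by positivity

lemma one_le_base (t : ℝ) (x : E3) : (1:ℝ) ≤ 1 + t ^ 2 + ‖x‖ ^ 2 := by
  nlinarith [sq_nonneg t, sq_nonneg ‖x‖]

lemma one_le_jtx (t : ℝ) (x : E3) : 1 ≤ jtx t x := by
  have := Real.sqrt_le_sqrt (one_le_base t x)
  rwa [Real.sqrt_one] at this

lemma jtx_pos (t : ℝ) (x : E3) : 0 < jtx t x := lt_of_lt_of_le one_pos (one_le_jtx t x)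

lemma jtx_rpow (t : ℝ) (x : E3) (β : ℝ) :
    jtx t x ^ β = (1 + t ^ 2 + ‖x‖ ^ 2) ^ (β / 2) := by
  rw [jtx, Real.sqrt_eq_rpow, ← Real.rpow_mul (base_pos t x).le]
  congr 1; ring

lemma rpow_neg_antitone {a b : ℝ} (ha : 0 < a) (hab : a ≤ b) {c : ℝ} (hc : 0 ≤ c) :
    b ^ (-c) ≤ a ^ (-c) := Real.rpow_le_rpow_of_nonpos ha hab (neg_nonpos.mpr hc)

/-- separation of the space-time bracket into time and space factors -/
lemma jtx_neg_rpow_le_prod (u : ℝ) (z : E3) {a b : ℝ} (ha : 0 ≤ a) (hb : 0 ≤ b) :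
    jtx u z ^ (-(a + b)) ≤ (1 + u ^ 2) ^ (-(a / 2)) * (1 + ‖z‖ ^ 2) ^ (-(b / 2)) := by
  have hX : (0:ℝ) < 1 + u ^ 2 + ‖z‖ ^ 2 := base_pos u z
  have hu : (0:ℝ) < 1 + u ^ 2 := by positivity
  have hz : (0:ℝ) < 1 + ‖z‖ ^ 2 := by positivity
  have h1 : (1 + u ^ 2) ^ (a / 2) * (1 + ‖z‖ ^ 2) ^ (b / 2)
      ≤ (1 + u ^ 2 + ‖z‖ ^ 2) ^ ((a + b) / 2) := by
    have e : (a + b) / 2 = a / 2 + b / 2 := by ring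
    rw [e, Real.rpow_add hX]
    apply mul_le_mul
    · exact Real.rpow_le_rpow hu.le (by nlinarith [sq_nonneg ‖z‖]) (by linarith)
    · exact Real.rpow_le_rpow hz.le (by nlinarith [sq_nonneg u]) (by linarith)
    · exact Real.rpow_nonneg hz.le _
    · exact Real.rpow_nonneg hX.le _
  rw [jtx_rpow]
  have e2 : -(a + b) / 2 = -((a + b) / 2) := by ring
  rw [e2, Real.rpow_neg hX.le, Real.rpow_neg hu.le, Real.rpow_neg hz.le, ← mul_inv]
  exact inv_anti₀ (by positivity) h1

lemma jtx_neg_rpow_le_space (u : ℝ) (z : E3) {p : ℝ} (hp : 0 ≤ p) :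
    jtx u z ^ (-p) ≤ (1 + ‖z‖ ^ 2) ^ (-(p / 2)) := by
  have h := jtx_neg_rpow_le_prod u z le_rfl hp
  have hu : (0:ℝ) < 1 + u ^ 2 := by positivity
  rw [zero_add] at h
  simpa [Real.rpow_zero] using h

/-- peeling: if `P ≤ 2 Q`, `Q ≥ 1`, `0 ≤ β₂ ≤ c ≤ β₁` then `Q^(-c) ≤ 2^β₁ P^(-β₂)`. -/
lemma peel {P Q β₁ β₂ c : ℝ} (hPpos : 0 < P) (hQ1 : 1 ≤ Q) (hPQ : P ≤ 2 * Q)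
    (h0 : 0 ≤ β₂) (hc1 : β₂ ≤ c) (hc2 : c ≤ β₁) :
    Q ^ (-c) ≤ 2 ^ β₁ * P ^ (-β₂) := by
  have hQpos : 0 < Q := lt_of_lt_of_le one_pos hQ1
  have hkey : P ^ β₂ ≤ 2 ^ β₁ * Q ^ c := by
    calc P ^ β₂ ≤ (2 * Q) ^ β₂ := Real.rpow_le_rpow hPpos.le hPQ h0
      _ = 2 ^ β₂ * Q ^ β₂ := Real.mul_rpow (by norm_num) hQpos.le
      _ ≤ 2 ^ β₁ * Q ^ c := by
          apply mul_le_mul (Real.rpow_le_rpow_of_exponent_le one_le_two (hc1.trans hc2))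
            (Real.rpow_le_rpow_of_exponent_le hQ1 hc1)
            (Real.rpow_nonneg hQpos.le _) (Real.rpow_nonneg (by norm_num) _)
  have hPb : 0 < P ^ β₂ := Real.rpow_pos_of_pos hPpos _
  have hQc : 0 < Q ^ c := Real.rpow_pos_of_pos hQpos _
  rw [Real.rpow_neg hQpos.le, Real.rpow_neg hPpos.le]
  calc (Q ^ c)⁻¹ = ((Q ^ c)⁻¹ * (P ^ β₂)) * (P ^ β₂)⁻¹ := by field_simp
    _ ≤ (2 ^ β₁) * (P ^ β₂)⁻¹ := by
        apply mul_le_mul_of_nonneg_right _ (inv_nonneg.mpr hPb.le)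
        rw [inv_mul_le_iff₀ hQc]
        calc P ^ β₂ ≤ 2 ^ β₁ * Q ^ c := hkey
          _ = Q ^ c * 2 ^ β₁ := by ring

/-- the master pointwise inequality -/
lemma master {β₁ β₂ p₂ : ℝ} (h0 : 0 ≤ β₂) (h1 : β₂ ≤ p₂) (h2 : p₂ ≤ β₁)
    (t s : ℝ) (x y : E3) :
    jtx (t - s) (x - y) ^ (-β₁) * jtx s y ^ (-β₂) ≤
      2 ^ β₁ * jtx t x ^ (-β₂) *
        (jtx (t - s) (x - y) ^ (-β₁) + jtx (t - s) (x - y) ^ (-p₂) + jtx s y ^ (-p₂)) := by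
  set D := jtx (t - s) (x - y) with hD
  set S := jtx s y with hS
  set P := jtx t x with hP
  have hD1 : 1 ≤ D := one_le_jtx _ _
  have hS1 : 1 ≤ S := one_le_jtx _ _
  have hP1 : 1 ≤ P := one_le_jtx _ _
  have hDpos : 0 < D := lt_of_lt_of_le one_pos hD1
  have hSpos : 0 < S := lt_of_lt_of_le one_pos hS1
  have hPpos : 0 < P := lt_of_lt_of_le one_pos hP1
  have htri : ‖x‖ ≤ ‖x - y‖ + ‖y‖ := by
    simpa using norm_add_le (x - y) y
  have hsq4 : Real.sqrt 4 = 2 := by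
    rw [show (4:ℝ) = 2 ^ 2 by norm_num, Real.sqrt_sq (by norm_num : (0:ℝ) ≤ 2)]
  have hM : 0 ≤ 2 ^ β₁ * P ^ (-β₂) := by positivity
  have hT1 : 0 ≤ D ^ (-β₁) := Real.rpow_nonneg hDpos.le _
  have hT2 : 0 ≤ D ^ (-p₂) := Real.rpow_nonneg hDpos.le _
  have hT3 : 0 ≤ S ^ (-p₂) := Real.rpow_nonneg hSpos.le _
  rcases le_total (1 + s ^ 2 + ‖y‖ ^ 2) (1 + (t - s) ^ 2 + ‖x - y‖ ^ 2) with hc | hc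
  · have hSD : S ≤ D := Real.sqrt_le_sqrt hc
    have hP2D : P ≤ 2 * D := by
      rw [hP, hD, jtx, jtx, show (2:ℝ) = Real.sqrt 4 from hsq4.symm,
        ← Real.sqrt_mul (by norm_num) _]
      apply Real.sqrt_le_sqrt
      nlinarith [mul_self_le_mul_self (norm_nonneg x) htri, sq_nonneg (‖x - y‖ - ‖y‖),
        sq_nonneg (t - 2 * s), norm_nonneg (x - y), norm_nonneg y]
    have e1 : D ^ (-β₁) = D ^ (-(β₁ - (p₂ - β₂))) * D ^ (-(p₂ - β₂)) := by
      rw [← Real.rpow_add hDpos]; congr 1; ring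
    have h3 : D ^ (-(p₂ - β₂)) ≤ S ^ (-(p₂ - β₂)) :=
      rpow_neg_antitone hSpos hSD (by linarith)
    have h4 : D ^ (-(β₁ - (p₂ - β₂))) ≤ 2 ^ β₁ * P ^ (-β₂) :=
      peel hPpos hD1 hP2D h0 (by linarith) (by linarith)
    have e2 : S ^ (-(p₂ - β₂)) * S ^ (-β₂) = S ^ (-p₂) := by
      rw [← Real.rpow_add hSpos]; congr 1; ring
    calc D ^ (-β₁) * S ^ (-β₂)
        = D ^ (-(β₁ - (p₂ - β₂))) * (D ^ (-(p₂ - β₂)) * S ^ (-β₂)) := by rw [e1]; ring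
      _ ≤ (2 ^ β₁ * P ^ (-β₂)) * (S ^ (-(p₂ - β₂)) * S ^ (-β₂)) := by
          apply mul_le_mul h4 _ (by positivity) hM
          exact mul_le_mul_of_nonneg_right h3 (Real.rpow_nonneg hSpos.le _)
      _ = (2 ^ β₁ * P ^ (-β₂)) * S ^ (-p₂) := by rw [e2]
      _ ≤ 2 ^ β₁ * P ^ (-β₂) * (D ^ (-β₁) + D ^ (-p₂) + S ^ (-p₂)) := by nlinarith
  · have hP2S : P ≤ 2 * S := by
      rw [hP, hS, jtx, jtx, show (2:ℝ) = Real.sqrt 4 from hsq4.symm,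
        ← Real.sqrt_mul (by norm_num) _]
      apply Real.sqrt_le_sqrt
      nlinarith [mul_self_le_mul_self (norm_nonneg x) htri, sq_nonneg (‖x - y‖ - ‖y‖),
        sq_nonneg (t - 2 * s), norm_nonneg (x - y), norm_nonneg y]
    have h4 : S ^ (-β₂) ≤ 2 ^ β₁ * P ^ (-β₂) :=
      peel hPpos hS1 hP2S h0 le_rfl (h1.trans h2)
    calc D ^ (-β₁) * S ^ (-β₂)
        ≤ D ^ (-β₁) * (2 ^ β₁ * P ^ (-β₂)) :=
          mul_le_mul_of_nonneg_left h4 hT1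
      _ = 2 ^ β₁ * P ^ (-β₂) * D ^ (-β₁) := by ring
      _ ≤ 2 ^ β₁ * P ^ (-β₂) * (D ^ (-β₁) + D ^ (-p₂) + S ^ (-p₂)) := by nlinarith

lemma intSpace {r : ℝ} (hr : 3 < r) :
    Integrable (fun y : E3 => (1 + ‖y‖ ^ 2) ^ (-(r / 2))) := by
  have h := integrable_rpow_neg_one_add_norm_sq (E := E3) (μ := volume) (r := r)
    (by rw [finrank_euclideanSpace_fin]; exact_mod_cast hr)
  simpa [neg_div] using h

lemma intTime {r : ℝ} (hr : 1 < r) :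
    Integrable (fun u : ℝ => (1 + u ^ 2) ^ (-(r / 2))) := by
  have h := integrable_rpow_neg_one_add_norm_sq (E := ℝ) (μ := volume) (r := r)
    (by simpa using hr)
  simpa [Real.norm_eq_abs, sq_abs, neg_div] using h

lemma cont_jtx_shift (u : ℝ) (x : E3) (p : ℝ) :
    Continuous fun y : E3 => jtx u (x - y) ^ p := by
  have hb : Continuous fun y : E3 => jtx u (x - y) := by
    apply Real.continuous_sqrt.comp; fun_prop
  exact hb.rpow_const fun y => Or.inl (ne_of_gt (jtx_pos _ _))

lemma cont_jtx_snd (s : ℝ) (p : ℝ) :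
    Continuous fun y : E3 => jtx s y ^ p := by
  have hb : Continuous fun y : E3 => jtx s y := by
    apply Real.continuous_sqrt.comp; fun_prop
  exact hb.rpow_const fun y => Or.inl (ne_of_gt (jtx_pos _ _))

end Stmt5Aux

-- STATEMENT 5: For `β₂ ≥ 3`, `β₁ ≥ β₂`, `β₁ > 4` there is `C = C(β₁,β₂)` such that for all
-- `t ≥ 0`, `x ∈ ℝ³`, `∫_0^t ∫_{ℝ³} ⟨t−s,x−y⟩^{−β₁} ⟨s,y⟩^{−β₂} dy ds ≤ C ⟨t,x⟩^{−β₂}`.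
open Stmt5Aux in
set_option maxHeartbeats 1000000 in
theorem stmt5 (β₁ β₂ : ℝ) (h2 : 3 ≤ β₂) (h12 : β₂ ≤ β₁) (h4 : 4 < β₁) :
    ∃ C : ℝ, 0 < C ∧ ∀ t : ℝ, 0 ≤ t → ∀ x : E3,
      (∫ s in (0:ℝ)..t, ∫ y : E3, jtx (t - s) (x - y) ^ (-β₁) * jtx s y ^ (-β₂)) ≤
        C * jtx t x ^ (-β₂) := by
  set p₂ : ℝ := max β₂ ((4 + β₁) / 2) with hp₂def
  have hp₂4 : 4 < p₂ := lt_of_lt_of_le (by linarith) (le_max_right _ _)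
  have hβ₂p₂ : β₂ ≤ p₂ := le_max_left _ _
  have hp₂β₁ : p₂ ≤ β₁ := max_le h12 (by linarith)
  set a₁ : ℝ := (β₁ - 2) / 2 with ha₁def
  set b₁ : ℝ := (β₁ + 2) / 2 with hb₁def
  set a₂ : ℝ := (p₂ - 2) / 2 with ha₂def
  set b₂ : ℝ := (p₂ + 2) / 2 with hb₂def
  have ha₁ : 1 < a₁ := by rw [ha₁def]; linarith
  have hb₁ : 3 < b₁ := by rw [hb₁def]; linarith
  have ha₂ : 1 < a₂ := by rw [ha₂def]; linarith
  have hb₂ : 3 < b₂ := by rw [hb₂def]; linarith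
  have hab₁ : a₁ + b₁ = β₁ := by rw [ha₁def, hb₁def]; ring
  have hab₂ : a₂ + b₂ = p₂ := by rw [ha₂def, hb₂def]; ring
  set K₁ : ℝ := ∫ y : E3, (1 + ‖y‖ ^ 2) ^ (-(b₁ / 2)) with hK₁def
  set K₂ : ℝ := ∫ y : E3, (1 + ‖y‖ ^ 2) ^ (-(b₂ / 2)) with hK₂def
  set J₁ : ℝ := ∫ u : ℝ, (1 + u ^ 2) ^ (-(a₁ / 2)) with hJ₁def
  set J₂ : ℝ := ∫ u : ℝ, (1 + u ^ 2) ^ (-(a₂ / 2)) with hJ₂def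
  have hK₁0 : 0 ≤ K₁ := integral_nonneg fun y => Real.rpow_nonneg (by positivity) _
  have hK₂0 : 0 ≤ K₂ := integral_nonneg fun y => Real.rpow_nonneg (by positivity) _
  have hJ₁0 : 0 ≤ J₁ := integral_nonneg fun u => Real.rpow_nonneg (by positivity) _
  have hJ₂0 : 0 ≤ J₂ := integral_nonneg fun u => Real.rpow_nonneg (by positivity) _
  have h2pow : (0:ℝ) < 2 ^ β₁ := Real.rpow_pos_of_pos two_pos _
  refine ⟨1 + 2 ^ β₁ * (K₁ * J₁ + K₂ * J₂ + K₂ * J₂), by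
    nlinarith [mul_nonneg hK₁0 hJ₁0, mul_nonneg hK₂0 hJ₂0], ?_⟩
  intro t ht x
  set P : ℝ := jtx t x with hPdef
  have hP1 : 1 ≤ P := one_le_jtx t x
  have hPpos : 0 < P := lt_of_lt_of_le one_pos hP1
  have hPr : 0 ≤ P ^ (-β₂) := Real.rpow_nonneg hPpos.le _
  -- inner integral estimate
  set G : ℝ → ℝ := fun s => 2 ^ β₁ * P ^ (-β₂) *
    ((1 + (t - s) ^ 2) ^ (-(a₁ / 2)) * K₁ + (1 + (t - s) ^ 2) ^ (-(a₂ / 2)) * K₂ +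
      (1 + s ^ 2) ^ (-(a₂ / 2)) * K₂) with hGdef
  have hInner : ∀ s : ℝ,
      (∫ y : E3, jtx (t - s) (x - y) ^ (-β₁) * jtx s y ^ (-β₂)) ≤ G s := by
    intro s
    -- integrable bound functions
    have hIW₁ : Integrable (fun y : E3 =>
        (1 + (t - s) ^ 2) ^ (-(a₁ / 2)) * (1 + ‖x - y‖ ^ 2) ^ (-(b₁ / 2))) :=
      (((intSpace hb₁).comp_sub_left x).const_mul _)
    have hIW₂ : Integrable (fun y : E3 =>
        (1 + (t - s) ^ 2) ^ (-(a₂ / 2)) * (1 + ‖x - y‖ ^ 2) ^ (-(b₂ / 2))) :=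
      (((intSpace hb₂).comp_sub_left x).const_mul _)
    have hIW₃ : Integrable (fun y : E3 =>
        (1 + s ^ 2) ^ (-(a₂ / 2)) * (1 + ‖y‖ ^ 2) ^ (-(b₂ / 2))) :=
      ((intSpace hb₂).const_mul _)
    have hIW : Integrable (fun y : E3 => 2 ^ β₁ * P ^ (-β₂) *
        ((1 + (t - s) ^ 2) ^ (-(a₁ / 2)) * (1 + ‖x - y‖ ^ 2) ^ (-(b₁ / 2)) +
         (1 + (t - s) ^ 2) ^ (-(a₂ / 2)) * (1 + ‖x - y‖ ^ 2) ^ (-(b₂ / 2)) +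
         (1 + s ^ 2) ^ (-(a₂ / 2)) * (1 + ‖y‖ ^ 2) ^ (-(b₂ / 2)))) :=
      (((hIW₁.add hIW₂).add hIW₃).const_mul _)
    have hIF : Integrable (fun y : E3 => jtx (t - s) (x - y) ^ (-β₁) * jtx s y ^ (-β₂)) := by
      apply Integrable.mono' ((intSpace (by linarith : (3:ℝ) < β₁)).comp_sub_left x)
      · exact ((cont_jtx_shift (t - s) x (-β₁)).mul (cont_jtx_snd s (-β₂))).aestronglyMeasurable
      · refine Filter.Eventually.of_forall fun y => ?_
        have h5 : jtx s y ^ (-β₂) ≤ 1 :=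
          Real.rpow_le_one_of_one_le_of_nonpos (one_le_jtx s y) (by linarith)
        have h6 : jtx (t - s) (x - y) ^ (-β₁) ≤ (1 + ‖x - y‖ ^ 2) ^ (-(β₁ / 2)) :=
          jtx_neg_rpow_le_space _ _ (by linarith)
        have h7 : 0 ≤ jtx (t - s) (x - y) ^ (-β₁) := Real.rpow_nonneg (jtx_pos _ _).le _
        have h8 : 0 ≤ jtx s y ^ (-β₂) := Real.rpow_nonneg (jtx_pos _ _).le _
        rw [Real.norm_eq_abs, abs_of_nonneg (by positivity)]
        calc jtx (t - s) (x - y) ^ (-β₁) * jtx s y ^ (-β₂)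
            ≤ jtx (t - s) (x - y) ^ (-β₁) * 1 := mul_le_mul_of_nonneg_left h5 h7
          _ = jtx (t - s) (x - y) ^ (-β₁) := mul_one _
          _ ≤ (1 + ‖x - y‖ ^ 2) ^ (-(β₁ / 2)) := h6
    -- pointwise bound
    have hpt : ∀ y : E3, jtx (t - s) (x - y) ^ (-β₁) * jtx s y ^ (-β₂) ≤
        2 ^ β₁ * P ^ (-β₂) *
        ((1 + (t - s) ^ 2) ^ (-(a₁ / 2)) * (1 + ‖x - y‖ ^ 2) ^ (-(b₁ / 2)) +
         (1 + (t - s) ^ 2) ^ (-(a₂ / 2)) * (1 + ‖x - y‖ ^ 2) ^ (-(b₂ / 2)) +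
         (1 + s ^ 2) ^ (-(a₂ / 2)) * (1 + ‖y‖ ^ 2) ^ (-(b₂ / 2))) := by
      intro y
      have hmas := master (by linarith : (0:ℝ) ≤ β₂) hβ₂p₂ hp₂β₁ t s x y
      have hs₁ : jtx (t - s) (x - y) ^ (-β₁) ≤
          (1 + (t - s) ^ 2) ^ (-(a₁ / 2)) * (1 + ‖x - y‖ ^ 2) ^ (-(b₁ / 2)) := by
        have := jtx_neg_rpow_le_prod (t - s) (x - y) (le_of_lt (by linarith : (0:ℝ) < a₁))
          (le_of_lt (by linarith : (0:ℝ) < b₁))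
        rwa [hab₁] at this
      have hs₂ : jtx (t - s) (x - y) ^ (-p₂) ≤
          (1 + (t - s) ^ 2) ^ (-(a₂ / 2)) * (1 + ‖x - y‖ ^ 2) ^ (-(b₂ / 2)) := by
        have := jtx_neg_rpow_le_prod (t - s) (x - y) (le_of_lt (by linarith : (0:ℝ) < a₂))
          (le_of_lt (by linarith : (0:ℝ) < b₂))
        rwa [hab₂] at this
      have hs₃ : jtx s y ^ (-p₂) ≤
          (1 + s ^ 2) ^ (-(a₂ / 2)) * (1 + ‖y‖ ^ 2) ^ (-(b₂ / 2)) := by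
        have := jtx_neg_rpow_le_prod s y (le_of_lt (by linarith : (0:ℝ) < a₂))
          (le_of_lt (by linarith : (0:ℝ) < b₂))
        rwa [hab₂] at this
      refine hmas.trans ?_
      have hM : 0 ≤ 2 ^ β₁ * P ^ (-β₂) := by positivity
      apply mul_le_mul_of_nonneg_left _ hM
      exact add_le_add (add_le_add hs₁ hs₂) hs₃
    calc (∫ y : E3, jtx (t - s) (x - y) ^ (-β₁) * jtx s y ^ (-β₂))
        ≤ ∫ y : E3, 2 ^ β₁ * P ^ (-β₂) *
          ((1 + (t - s) ^ 2) ^ (-(a₁ / 2)) * (1 + ‖x - y‖ ^ 2) ^ (-(b₁ / 2)) +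
           (1 + (t - s) ^ 2) ^ (-(a₂ / 2)) * (1 + ‖x - y‖ ^ 2) ^ (-(b₂ / 2)) +
           (1 + s ^ 2) ^ (-(a₂ / 2)) * (1 + ‖y‖ ^ 2) ^ (-(b₂ / 2))) :=
          integral_mono hIF hIW hpt
      _ = G s := by
          have h12 : Integrable (fun y : E3 =>
              (1 + (t - s) ^ 2) ^ (-(a₁ / 2)) * (1 + ‖x - y‖ ^ 2) ^ (-(b₁ / 2)) +
              (1 + (t - s) ^ 2) ^ (-(a₂ / 2)) * (1 + ‖x - y‖ ^ 2) ^ (-(b₂ / 2))) :=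
            hIW₁.add hIW₂
          rw [integral_const_mul]
          rw [integral_add h12 hIW₃]
          rw [integral_add hIW₁ hIW₂]
          rw [integral_const_mul, integral_const_mul, integral_const_mul]
          rw [integral_sub_left_eq_self (fun y : E3 => (1 + ‖y‖ ^ 2) ^ (-(b₁ / 2))) volume x]
          rw [integral_sub_left_eq_self (fun y : E3 => (1 + ‖y‖ ^ 2) ^ (-(b₂ / 2))) volume x]
  -- outer integral
  by_cases hH : IntervalIntegrable
      (fun s => ∫ y : E3, jtx (t - s) (x - y) ^ (-β₁) * jtx s y ^ (-β₂)) volume 0 t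
  swap
  · rw [intervalIntegral.integral_undef hH]
    positivity
  · have hct : Continuous fun s : ℝ => ((1 + (t - s) ^ 2) ^ (-(a₁ / 2)) : ℝ) := by
      apply Continuous.rpow_const (by fun_prop)
      intro s; left; positivity
    have hct₂ : Continuous fun s : ℝ => ((1 + (t - s) ^ 2) ^ (-(a₂ / 2)) : ℝ) := by
      apply Continuous.rpow_const (by fun_prop)
      intro s; left; positivity
    have hct₃ : Continuous fun s : ℝ => ((1 + s ^ 2) ^ (-(a₂ / 2)) : ℝ) := by
      apply Continuous.rpow_const (by fun_prop)
      intro s; left; positivity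
    have hGc : Continuous G := by
      rw [hGdef]
      exact continuous_const.mul (((hct.mul continuous_const).add
        (hct₂.mul continuous_const)).add (hct₃.mul continuous_const))
    -- bounds on the three time integrals
    have htime : ∀ a : ℝ, 1 < a →
        (∫ s in (0:ℝ)..t, (1 + s ^ 2) ^ (-(a / 2))) ≤ ∫ u : ℝ, (1 + u ^ 2) ^ (-(a / 2)) := by
      intro a ha
      rw [intervalIntegral.integral_of_le ht]
      exact setIntegral_le_integral (intTime ha)
        (Filter.Eventually.of_forall fun u => Real.rpow_nonneg (by positivity) _)
    have hcomp : ∀ a : ℝ, (∫ s in (0:ℝ)..t, (1 + (t - s) ^ 2) ^ (-(a / 2)))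
        = ∫ s in (0:ℝ)..t, (1 + s ^ 2) ^ (-(a / 2)) := by
      intro a
      have := intervalIntegral.integral_comp_sub_left
        (a := (0:ℝ)) (b := t) (fun u : ℝ => (1 + u ^ 2) ^ (-(a / 2))) t
      simpa using this
    have hA₁ : (∫ s in (0:ℝ)..t, (1 + (t - s) ^ 2) ^ (-(a₁ / 2))) ≤ J₁ := by
      rw [hcomp a₁]; exact htime a₁ ha₁
    have hA₂ : (∫ s in (0:ℝ)..t, (1 + (t - s) ^ 2) ^ (-(a₂ / 2))) ≤ J₂ := by
      rw [hcomp a₂]; exact htime a₂ ha₂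
    have hA₃ : (∫ s in (0:ℝ)..t, (1 + s ^ 2) ^ (-(a₂ / 2))) ≤ J₂ := htime a₂ ha₂
    have hnn : ∀ (f : ℝ → ℝ), (∀ s, 0 ≤ f s) → 0 ≤ ∫ s in (0:ℝ)..t, f s := by
      intro f hf
      rw [intervalIntegral.integral_of_le ht]
      exact setIntegral_nonneg measurableSet_Ioc fun s _ => hf s
    calc (∫ s in (0:ℝ)..t, ∫ y : E3, jtx (t - s) (x - y) ^ (-β₁) * jtx s y ^ (-β₂))
        ≤ ∫ s in (0:ℝ)..t, G s := by
          apply intervalIntegral.integral_mono_on ht hH (hGc.intervalIntegrable 0 t)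
          exact fun s _ => hInner s
      _ = 2 ^ β₁ * P ^ (-β₂) *
          ((∫ s in (0:ℝ)..t, (1 + (t - s) ^ 2) ^ (-(a₁ / 2))) * K₁ +
           (∫ s in (0:ℝ)..t, (1 + (t - s) ^ 2) ^ (-(a₂ / 2))) * K₂ +
           (∫ s in (0:ℝ)..t, (1 + s ^ 2) ^ (-(a₂ / 2))) * K₂) := by
          rw [hGdef]
          rw [intervalIntegral.integral_const_mul]
          rw [intervalIntegral.integral_add
            (f := fun s => (1 + (t - s) ^ 2) ^ (-(a₁ / 2)) * K₁ + (1 + (t - s) ^ 2) ^ (-(a₂ / 2)) * K₂)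
            (g := fun s => (1 + s ^ 2) ^ (-(a₂ / 2)) * K₂)
            (((hct.mul continuous_const).add (hct₂.mul continuous_const)).intervalIntegrable 0 t)
            ((hct₃.mul continuous_const).intervalIntegrable 0 t)]
          rw [intervalIntegral.integral_add
            (f := fun s => (1 + (t - s) ^ 2) ^ (-(a₁ / 2)) * K₁)
            (g := fun s => (1 + (t - s) ^ 2) ^ (-(a₂ / 2)) * K₂)
            ((hct.mul continuous_const).intervalIntegrable 0 t)
            ((hct₂.mul continuous_const).intervalIntegrable 0 t)]
          rw [intervalIntegral.integral_mul_const, intervalIntegral.integral_mul_const,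
            intervalIntegral.integral_mul_const]
      _ ≤ 2 ^ β₁ * P ^ (-β₂) * (J₁ * K₁ + J₂ * K₂ + J₂ * K₂) := by
          apply mul_le_mul_of_nonneg_left _ (by positivity)
          exact add_le_add (add_le_add (mul_le_mul_of_nonneg_right hA₁ hK₁0)
            (mul_le_mul_of_nonneg_right hA₂ hK₂0)) (mul_le_mul_of_nonneg_right hA₃ hK₂0)
      _ ≤ (1 + 2 ^ β₁ * (K₁ * J₁ + K₂ * J₂ + K₂ * J₂)) * P ^ (-β₂) := by
          nlinarith [mul_nonneg hK₁0 hJ₁0, mul_nonneg hK₂0 hJ₂0]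

end
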